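/- There exists a primitive root g modulo 37 such that the cosets X_i = g^i·H (0 ≤ i < 4, indices mod 4) of the subgroup H of 4th-power residues in 𝔽_37^× satisfy: for all i, j, if j ≠ i+2 (mod 4) then X_i + X_j = 𝔽_37 ∖ {0}, and if j = i+2 (mod 4) then X_i + X_j = 𝔽_37. (This gives a finite representation of relation algebra 83_83, whose four diversity atoms are all flexible, over a base set of size 37.) -/
import Mathlib


open Pointwise

/-- The set of nonzero `n`-th power residues in `𝔽_p = ZMod p`. -/
def Hpow (p n : ℕ) : Set (ZMod p) := {x | ∃ u : (ZMod p)ˣ, (u : ZMod p) ^ n = x}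

/-- The coset `X_i = g^i · H` of the subgroup of `n`-th power residues. -/
noncomputable def Xc (p n : ℕ) [Fact p.Prime] (g : ZMod p) (i : ℤ) : Set (ZMod p) :=
  g ^ i • Hpow p n

instance : Fact (Nat.Prime 37) := ⟨by norm_num⟩

def Hf : Finset (ZMod 37) := {1, 7, 9, 10, 12, 16, 26, 33, 34}

lemma hH : Hpow 37 4 = (Hf : Set (ZMod 37)) := by
  ext x
  simp only [Hpow, Set.mem_setOf_eq, Finset.mem_coe]
  revert x
  decide

lemma key (c : ZMod 37) (hc : c ≠ 0) : c ^ 4 • Hpow 37 4 = Hpow 37 4 := by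
  obtain ⟨cu, rfl⟩ := hc.isUnit
  ext x
  rw [Set.mem_smul_set]
  constructor
  · rintro ⟨y, ⟨u, rfl⟩, rfl⟩
    exact ⟨cu * u, by push_cast [smul_eq_mul]; ring⟩
  · rintro ⟨u, rfl⟩
    refine ⟨((cu⁻¹ * u : (ZMod 37)ˣ) : ZMod 37) ^ 4, ⟨cu⁻¹ * u, rfl⟩, ?_⟩
    push_cast [smul_eq_mul]
    rw [← mul_pow, ← mul_assoc, mul_inv_cancel₀ hc, one_mul]

lemma Xc_period (i : ℤ) : Xc 37 4 2 i = Xc 37 4 2 (i % 4) := by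
  have h2 : (2 : ZMod 37) ≠ 0 := by decide
  have h : (2 : ZMod 37) ^ i = (2 : ZMod 37) ^ (i % 4) * ((2 : ZMod 37) ^ (i / 4)) ^ 4 := by
    rw [← zpow_natCast ((2 : ZMod 37) ^ (i / 4)), ← zpow_mul, ← zpow_add₀ h2]
    congr 1
    omega
  unfold Xc
  rw [h, mul_smul, key _ (zpow_ne_zero _ h2)]

def F1 : Finset (ZMod 37) := {2, 14, 15, 18, 20, 24, 29, 31, 32}
def F2 : Finset (ZMod 37) := {3, 4, 11, 21, 25, 27, 28, 30, 36}
def F3 : Finset (ZMod 37) := {5, 6, 8, 13, 17, 19, 22, 23, 35}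

lemma XcNat (r : ℕ) {F : Finset (ZMod 37)} (h : (2 : ZMod 37) ^ r • Hf = F) :
    Xc 37 4 2 (r : ℤ) = (F : Set (ZMod 37)) := by
  unfold Xc
  rw [zpow_natCast, hH, ← Finset.coe_smul_finset, h]

lemma Xc0 : Xc 37 4 2 (0 : ℤ) = (Hf : Set (ZMod 37)) := XcNat 0 (by decide)
lemma Xc1 : Xc 37 4 2 (1 : ℤ) = (F1 : Set (ZMod 37)) := XcNat 1 (by decide)
lemma Xc2 : Xc 37 4 2 (2 : ℤ) = (F2 : Set (ZMod 37)) := XcNat 2 (by decide)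
lemma Xc3 : Xc 37 4 2 (3 : ℤ) = (F3 : Set (ZMod 37)) := XcNat 3 (by decide)

lemma sum_nz {A B : Finset (ZMod 37)} (h : A + B = Finset.univ \ {0}) :
    (A : Set (ZMod 37)) + (B : Set (ZMod 37)) = {(0 : ZMod 37)}ᶜ := by
  rw [← Finset.coe_add, h]
  ext x
  simp

lemma sum_full {A B : Finset (ZMod 37)} (h : A + B = Finset.univ) :
    (A : Set (ZMod 37)) + (B : Set (ZMod 37)) = Set.univ := by
  rw [← Finset.coe_add, h, Finset.coe_univ]

/-- The cosets of the index-4 subgroup of `𝔽_37ˣ` give a representation of relation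
algebra `83_83`: every sumset `X_i + X_j` is all of `𝔽_37 \ {0}`, together with `0`
exactly when `j = i + 2 (mod 4)`. -/
theorem stmt_17 : ∃ g : ZMod 37, IsPrimitiveRoot g 36 ∧
    ∀ i j : ℤ,
      ((j : ZMod 4) ≠ ((i + 2 : ℤ) : ZMod 4) →
        Xc 37 4 g i + Xc 37 4 g j = {(0 : ZMod 37)}ᶜ) ∧
      ((j : ZMod 4) = ((i + 2 : ℤ) : ZMod 4) →
        Xc 37 4 g i + Xc 37 4 g j = Set.univ) := by
  refine ⟨2, (IsPrimitiveRoot.iff (by norm_num)).mpr ⟨by decide,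
    fun l h1 h2 => (by decide : ∀ l, l < 36 → (0 < l → (2:ZMod 37)^l ≠ 1)) l h2 h1⟩,
    fun i j => ?_⟩
  rw [Xc_period i, Xc_period j]
  simp only [Ne, ZMod.intCast_eq_intCast_iff']
  have hii : i % 4 = 0 ∨ i % 4 = 1 ∨ i % 4 = 2 ∨ i % 4 = 3 := by omega
  have hjj : j % 4 = 0 ∨ j % 4 = 1 ∨ j % 4 = 2 ∨ j % 4 = 3 := by omega
  rcases hii with h1 | h1 | h1 | h1 <;> rcases hjj with h2 | h2 | h2 | h2 <;>
    rw [h1, h2] <;> constructor <;> intro hcond <;>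
    first
      | omega
      | (simp only [Xc0, Xc1, Xc2, Xc3]
         first
           | (apply sum_nz; decide)
           | (apply sum_full; decide))
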